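/- Let L be a solvable Leibniz A-algebra of derived length n+1. Then (i) L = A_n ∔ A_{n−1} ∔ … ∔ A_0 (vector space direct sum) where each A_i is an abelian subalgebra of L, and (ii) this decomposition can be chosen so that L^(i) = A_n ∔ A_{n−1} ∔ … ∔ A_i for each 0 ≤ i ≤ n. -/
import Mathlib


/-- A (right) Leibniz algebra structure on an `F`-vector space `L`:
a bilinear bracket satisfying `[x,[y,z]] = [[x,y],z] - [[x,z],y]`. -/
structure LeibnizAlg (F : Type*) (L : Type*) [Field F] [AddCommGroup L] [Module F L] where
  bracket : L →ₗ[F] L →ₗ[F] L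
  leibniz : ∀ x y z : L,
    bracket x (bracket y z) = bracket (bracket x y) z - bracket (bracket x z) y

namespace LeibnizAlg

variable {F : Type*} {L : Type*} [Field F] [AddCommGroup L] [Module F L]

/-- The product `[M, N]` of two subspaces: the span of all brackets `[m, n]`. -/
def prod (A : LeibnizAlg F L) (M N : Submodule F L) : Submodule F L :=
  Submodule.span F {z : L | ∃ m ∈ M, ∃ n ∈ N, z = A.bracket m n}

/-- A subalgebra: a subspace closed under the product. -/
def IsSubalgebra (A : LeibnizAlg F L) (S : Submodule F L) : Prop :=
  A.prod S S ≤ S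

/-- A (two-sided) ideal: `[I, L] ⊆ I` and `[L, I] ⊆ I`. -/
def IsIdeal (A : LeibnizAlg F L) (I : Submodule F L) : Prop :=
  A.prod I ⊤ ≤ I ∧ A.prod ⊤ I ≤ I

/-- Lower central series of a subspace `U`: `lcs U 0 = U = U¹`,
`lcs U k = U^(k+1)`, i.e. `lcs U (k+1) = [lcs U k, U]`. -/
def lcs (A : LeibnizAlg F L) (U : Submodule F L) : ℕ → Submodule F L
  | 0 => U
  | k + 1 => A.prod (lcs A U k) U

/-- `U` is nilpotent: `U^(n+1) = 0` for some `n`. -/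
def IsNilpotentSub (A : LeibnizAlg F L) (U : Submodule F L) : Prop :=
  ∃ n : ℕ, A.lcs U n = ⊥

/-- `U` is abelian: `[U, U] = 0`. -/
def IsAbelian (A : LeibnizAlg F L) (U : Submodule F L) : Prop :=
  A.prod U U = ⊥

/-- An `A`-algebra: every nilpotent subalgebra is abelian. -/
def IsAAlgebra (A : LeibnizAlg F L) : Prop :=
  ∀ U : Submodule F L, A.IsSubalgebra U → A.IsNilpotentSub U → A.IsAbelian U

/-- Derived series: `derSeries 0 = L`, `derSeries (k+1) = [derSeries k, derSeries k]`. -/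
def derSeries (A : LeibnizAlg F L) : ℕ → Submodule F L
  | 0 => ⊤
  | k + 1 => A.prod (derSeries A k) (derSeries A k)

/-- `L` is solvable: some term of the derived series vanishes. -/
def IsSolvable (A : LeibnizAlg F L) : Prop :=
  ∃ n : ℕ, A.derSeries n = ⊥

/-- The centralizer `Z_L(U)` of a subspace `U`. -/
def centralizer (A : LeibnizAlg F L) (U : Submodule F L) : Submodule F L where
  carrier := {x : L | ∀ u ∈ U, A.bracket x u = 0 ∧ A.bracket u x = 0}
  add_mem' := by
    intro a b ha hb u hu
    refine ⟨?_, ?_⟩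
    · rw [map_add, LinearMap.add_apply, (ha u hu).1, (hb u hu).1, add_zero]
    · rw [map_add, (ha u hu).2, (hb u hu).2, add_zero]
  zero_mem' := by
    intro u hu
    refine ⟨?_, ?_⟩
    · rw [map_zero, LinearMap.zero_apply]
    · rw [map_zero]
  smul_mem' := by
    intro c a ha u hu
    refine ⟨?_, ?_⟩
    · rw [map_smul, LinearMap.smul_apply, (ha u hu).1, smul_zero]
    · rw [map_smul, (ha u hu).2, smul_zero]

/-- The centre of the subalgebra `M`: elements of `M` centralizing `M`. -/
def centerOf (A : LeibnizAlg F L) (M : Submodule F L) : Submodule F L :=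
  M ⊓ A.centralizer M

/-- `N` is the nilradical: the largest nilpotent ideal. -/
def IsNilradical (A : LeibnizAlg F L) (N : Submodule F L) : Prop :=
  A.IsIdeal N ∧ A.IsNilpotentSub N ∧
    ∀ I : Submodule F L, A.IsIdeal I → A.IsNilpotentSub I → I ≤ N

/-- A minimal ideal: a nonzero ideal containing no ideal other than `0` and itself. -/
def IsMinimalIdeal (A : LeibnizAlg F L) (I : Submodule F L) : Prop :=
  A.IsIdeal I ∧ I ≠ ⊥ ∧ ∀ J : Submodule F L, A.IsIdeal J → J ≤ I → J = ⊥ ∨ J = I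

/-- A maximal subalgebra. -/
def IsMaximalSubalgebra (A : LeibnizAlg F L) (M : Submodule F L) : Prop :=
  A.IsSubalgebra M ∧ M ≠ ⊤ ∧
    ∀ S : Submodule F L, A.IsSubalgebra S → M ≤ S → S = M ∨ S = ⊤

/-- `L` is φ-free: every ideal contained in all maximal subalgebras is zero. -/
def IsPhiFree (A : LeibnizAlg F L) : Prop :=
  ∀ I : Submodule F L, A.IsIdeal I →
    (∀ M : Submodule F L, A.IsMaximalSubalgebra M → I ≤ M) → I = ⊥

/-- `Asoc L`: the sum of the abelian minimal ideals. -/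
def asoc (A : LeibnizAlg F L) : Submodule F L :=
  sSup {I : Submodule F L | A.IsMinimalIdeal I ∧ A.IsAbelian I}

/-- A Cartan subalgebra: a nilpotent, self-normalizing subalgebra. -/
def IsCartan (A : LeibnizAlg F L) (C : Submodule F L) : Prop :=
  A.IsSubalgebra C ∧ A.IsNilpotentSub C ∧
    ∀ x : L, (∀ c ∈ C, A.bracket x c ∈ C ∧ A.bracket c x ∈ C) → x ∈ C

/-- A maximal nilpotent subalgebra. -/
def IsMaxNilpotentSubalgebra (A : LeibnizAlg F L) (U : Submodule F L) : Prop :=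
  A.IsSubalgebra U ∧ A.IsNilpotentSub U ∧
    ∀ V : Submodule F L, A.IsSubalgebra V → A.IsNilpotentSub V → U ≤ V → V = U

end LeibnizAlg

section Aux

variable {F : Type*} {L : Type*} [Field F] [AddCommGroup L] [Module F L]
variable (A : LeibnizAlg F L)

namespace LeibnizAlg

lemma mem_prod {M N : Submodule F L} {m n : L} (hm : m ∈ M) (hn : n ∈ N) :
    A.bracket m n ∈ A.prod M N :=
  Submodule.subset_span ⟨m, hm, n, hn, rfl⟩

lemma prod_le_iff {M N P : Submodule F L} :
    A.prod M N ≤ P ↔ ∀ m ∈ M, ∀ n ∈ N, A.bracket m n ∈ P := by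
  constructor
  · intro h m hm n hn; exact h (A.mem_prod hm hn)
  · intro h
    apply Submodule.span_le.2
    rintro z ⟨m, hm, n, hn, rfl⟩
    exact h m hm n hn

lemma prod_mono {M N M' N' : Submodule F L} (h1 : M ≤ M') (h2 : N ≤ N') :
    A.prod M N ≤ A.prod M' N' :=
  (A.prod_le_iff).2 fun m hm n hn => A.mem_prod (h1 hm) (h2 hn)

/-- rearranged Leibniz identity -/
lemma leibniz' (a b c : L) :
    A.bracket (A.bracket a b) c = A.bracket a (A.bracket b c) + A.bracket (A.bracket a c) b := by
  have := A.leibniz a b c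
  rw [this]; abel

/-- `[U², U] ⊆ U²` when `U` is a subalgebra. -/
lemma prod_prod_le {U : Submodule F L} (hU : A.IsSubalgebra U) :
    A.prod (A.prod U U) U ≤ A.prod U U := by
  rw [prod_le_iff]
  intro m hm u hu
  induction hm using Submodule.span_induction with
  | mem z hz =>
      obtain ⟨a, ha, b, hb, rfl⟩ := hz
      rw [A.leibniz' a b u]
      exact add_mem (A.mem_prod ha (hU (A.mem_prod hb hu)))
        (A.mem_prod (hU (A.mem_prod ha hu)) hb)
  | zero => simp
  | add x y _ _ hx hy => rw [map_add, LinearMap.add_apply]; exact add_mem hx hy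
  | smul c x _ hx => rw [map_smul, LinearMap.smul_apply]; exact Submodule.smul_mem _ c hx

/-- relative derived series -/
def derOf (U : Submodule F L) : ℕ → Submodule F L
  | 0 => U
  | k + 1 => A.prod (derOf U k) (derOf U k)

lemma derOf_mono {U V : Submodule F L} (h : U ≤ V) : ∀ k, A.derOf U k ≤ A.derOf V k := by
  intro k
  induction k with
  | zero => exact h
  | succ k ih => exact A.prod_mono ih ih

/-- solvability of a subspace -/
def Solv (U : Submodule F L) : Prop := ∃ k, A.derOf U k = ⊥

lemma Solv.mono {U V : Submodule F L} (h : U ≤ V) (hV : A.Solv V) : A.Solv U := by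
  obtain ⟨k, hk⟩ := hV
  exact ⟨k, le_bot_iff.1 (hk ▸ A.derOf_mono h k)⟩

lemma derOf_derSeries (i : ℕ) : ∀ k, A.derOf (A.derSeries i) k = A.derSeries (i + k) := by
  intro k
  induction k with
  | zero => rfl
  | succ k ih =>
      show A.prod (A.derOf (A.derSeries i) k) (A.derOf (A.derSeries i) k) = _
      rw [ih]; rfl

lemma derSeries_succ_le (i : ℕ) : A.derSeries (i+1) ≤ A.derSeries i := by
  induction i with
  | zero => exact le_top
  | succ k ih => exact A.prod_mono ih ih

lemma derSeries_antitone : ∀ {a b : ℕ}, a ≤ b → A.derSeries b ≤ A.derSeries a := by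
  intro a b hab
  induction hab with
  | refl => exact le_rfl
  | step _ ih => exact le_trans (A.derSeries_succ_le _) ih

lemma solv_derSeries (n : ℕ) (hlen : A.derSeries (n+1) = ⊥) (i : ℕ) : A.Solv (A.derSeries i) := by
  refine ⟨n + 1, ?_⟩
  rw [A.derOf_derSeries]
  exact le_bot_iff.1 (hlen ▸ A.derSeries_antitone (by omega))

end LeibnizAlg
end Aux

section Aux2

variable {F : Type*} {L : Type*} [Field F] [AddCommGroup L] [Module F L]

namespace LeibnizAlg

variable (A : LeibnizAlg F L)

/-- right multiplication by `x` -/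
def rmul (x : L) : Module.End F L := A.bracket.flip x

@[simp] lemma rmul_apply (x m : L) : A.rmul x m = A.bracket m x := rfl

lemma rmul_bracket (x a b : L) :
    A.rmul x (A.bracket a b) = A.bracket (A.rmul x a) b + A.bracket a (A.rmul x b) := by
  simp only [rmul_apply]
  rw [A.leibniz' a b x]; abel

/-- `f` is nilpotent on `U` -/
def NilpOn (f : Module.End F L) (U : Submodule F L) : Prop := ∃ N, ∀ u ∈ U, (f ^ N) u = 0

lemma NilpOn.mono {f : Module.End F L} {U V : Submodule F L} (h : U ≤ V)
    (hV : NilpOn f V) : NilpOn f U := by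
  obtain ⟨N, hN⟩ := hV
  exact ⟨N, fun u hu => hN u (h hu)⟩

lemma ker_pow_bracket (x : L) : ∀ (m p q : ℕ), p + q = m → ∀ a b : L,
    ((A.rmul x) ^ p) a = 0 → ((A.rmul x) ^ q) b = 0 →
    ((A.rmul x) ^ m) (A.bracket a b) = 0 := by
  intro m
  induction m with
  | zero =>
      intro p q hpq a b ha hb
      obtain ⟨rfl, rfl⟩ : p = 0 ∧ q = 0 := by omega
      simp only [pow_zero, Module.End.one_apply] at ha hb ⊢
      rw [ha, hb]; simp
  | succ m ih =>
      intro p q hpq a b ha hb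
      match p, q with
      | 0, q =>
          simp only [pow_zero, Module.End.one_apply] at ha
          rw [ha]; simp
      | p + 1, 0 =>
          simp only [pow_zero, Module.End.one_apply] at hb
          rw [hb]; simp
      | p + 1, q + 1 =>
          have step : ((A.rmul x) ^ (m + 1)) (A.bracket a b)
              = ((A.rmul x) ^ m) (A.rmul x (A.bracket a b)) := by
            rw [pow_succ, Module.End.mul_apply]
          rw [step, A.rmul_bracket, map_add]
          have h1 : ((A.rmul x) ^ m) (A.bracket (A.rmul x a) b) = 0 := by
            apply ih p (q+1) (by omega)
            · rw [← Module.End.mul_apply, ← pow_succ]; exact ha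
            · exact hb
          have h2 : ((A.rmul x) ^ m) (A.bracket a (A.rmul x b)) = 0 := by
            apply ih (p+1) q (by omega)
            · exact ha
            · rw [← Module.End.mul_apply, ← pow_succ]; exact hb
          rw [h1, h2, add_zero]

variable [FiniteDimensional F L]

/-- key lemma A: a solvable subalgebra on which all right multiplications are
nilpotent is abelian (in an A-algebra). -/
lemma abelian_of_all_rmul_nilp (hA : A.IsAAlgebra) :
    ∀ (d : ℕ) (U : Submodule F L), Module.finrank F U ≤ d → A.IsSubalgebra U →
      A.Solv U → (∀ x ∈ U, NilpOn (A.rmul x) U) → A.IsAbelian U := by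
  intro d
  induction d with
  | zero =>
      intro U hrank _ _ _
      have : U = ⊥ := Submodule.finrank_eq_zero.1 (by omega)
      subst this
      rw [IsAbelian, ← le_bot_iff, prod_le_iff]
      intro m hm n hn
      rw [Submodule.mem_bot] at hm
      subst hm; simp
  | succ d ih =>
      intro U hrank hsub hsolv hnilp
      set U' := A.prod U U with hU'def
      by_cases hU'bot : U' = ⊥
      · exact hU'bot
      -- U' < U
      have hU'ne : U' ≠ U := by
        intro h
        have hall : ∀ k, A.derOf U k = U := by
          intro k; induction k with
          | zero => rfl
          | succ k ihk => show A.prod (A.derOf U k) (A.derOf U k) = U; rw [ihk]; exact h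
        obtain ⟨k, hk⟩ := hsolv
        rw [hall k] at hk
        exact hU'bot (by rw [h, hk])
      have hU'lt : U' < U := lt_of_le_of_ne hsub hU'ne
      have hrankU' : Module.finrank F U' ≤ d :=
        Nat.lt_succ_iff.1 (lt_of_lt_of_le (Submodule.finrank_lt_finrank_of_lt hU'lt) hrank)
      -- helper to apply IH to proper subalgebras W with U' ≤ W ≤ U
      have applyIH : ∀ W : Submodule F L, W ≤ U → W ≠ U → U' ≤ W → A.IsAbelian W := by
        intro W hWU hWne hU'W
        have hWsub : A.IsSubalgebra W := le_trans (A.prod_mono hWU hWU) hU'W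
        have hWlt : W < U := lt_of_le_of_ne hWU hWne
        refine ih W ?_ hWsub (Solv.mono A hWU hsolv) ?_
        · exact Nat.lt_succ_iff.1 (lt_of_lt_of_le (Submodule.finrank_lt_finrank_of_lt hWlt) hrank)
        · exact fun x hx => NilpOn.mono hWU (hnilp x (hWU hx))
      by_cases hbig : ∀ x ∈ U, ∀ y ∈ U,
          U' ⊔ (Submodule.span F {x} ⊔ Submodule.span F {y}) ≠ U
      · -- every bracket lives in a proper subalgebra, hence vanishes
        rw [IsAbelian, ← le_bot_iff, prod_le_iff]
        intro x hx y hy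
        set W := U' ⊔ (Submodule.span F {x} ⊔ Submodule.span F {y}) with hW
        have hWU : W ≤ U := by
          refine sup_le hU'lt.le (sup_le ?_ ?_) <;>
            · rw [Submodule.span_le, Set.singleton_subset_iff]; assumption
        have hWab : A.IsAbelian W := applyIH W hWU (hbig x hx y hy) le_sup_left
        have hxW : x ∈ W := Submodule.mem_sup_right
          (Submodule.mem_sup_left (Submodule.mem_span_singleton_self x))
        have hyW : y ∈ W := Submodule.mem_sup_right
          (Submodule.mem_sup_right (Submodule.mem_span_singleton_self y))
        have := A.mem_prod hxW hyW
        rw [hWab] at this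
        exact this
      · push_neg at hbig
        obtain ⟨x, hx, y, hy, hxy⟩ := hbig
        have hU'ab : A.IsAbelian U' := applyIH U' hU'lt.le hU'ne le_rfl
        by_cases hcod1 : ∃ z ∈ U, U' ⊔ Submodule.span F {z} = U
        · -- codimension one case: explicit nilpotency computation
          obtain ⟨z, hz, hzU⟩ := hcod1
          set f := A.rmul z with hf
          have hidl : A.prod U' U ≤ U' := A.prod_prod_le hsub
          have hfU' : ∀ k, ∀ u' ∈ U', (f ^ k) u' ∈ U' := by
            intro k
            induction k with
            | zero => intro u' h; simpa using h
            | succ k ihk =>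
                intro u' h
                rw [pow_succ', Module.End.mul_apply]
                exact hidl (A.mem_prod (ihk u' h) hz)
          have key : ∀ k, A.lcs U (k+1) ≤ Submodule.span F ((f ^ k) '' (U' : Set L)) := by
            intro k
            induction k with
            | zero =>
                show A.prod U U ≤ _
                simp only [pow_zero]
                have : ⇑((1 : Module.End F L)) '' (U' : Set L) = (U' : Set L) := by
                  simp [Module.End.one_apply]
                rw [this, Submodule.span_eq]
            | succ k ihk =>
                show A.prod (A.lcs U (k+1)) U ≤ _
                refine le_trans (A.prod_mono ihk le_rfl) ?_
                rw [prod_le_iff]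
                intro m hm u hu
                induction hm using Submodule.span_induction with
                | mem w hw =>
                    obtain ⟨u', hu', rfl⟩ := hw
                    rw [← hzU] at hu
                    obtain ⟨u'', hu'', w2, hw2, rfl⟩ := Submodule.mem_sup.1 hu
                    obtain ⟨c, rfl⟩ := Submodule.mem_span_singleton.1 hw2
                    rw [map_add, map_smul]
                    have e1 : A.bracket ((f ^ k) u') u'' = 0 := by
                      have := A.mem_prod (hfU' k u' hu') hu''
                      rw [hU'ab] at this; exact this
                    have e2 : A.bracket ((f ^ k) u') z ∈
                        Submodule.span F ((f ^ (k+1)) '' (U' : Set L)) := by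
                      apply Submodule.subset_span
                      refine ⟨u', hu', ?_⟩
                      rw [pow_succ', Module.End.mul_apply]; rfl
                    rw [e1, zero_add]
                    exact Submodule.smul_mem _ c e2
                | zero => simp
                | add a b _ _ hA1 hA2 =>
                    rw [map_add, LinearMap.add_apply]; exact add_mem hA1 hA2
                | smul c a _ hA1 =>
                    rw [map_smul, LinearMap.smul_apply]; exact Submodule.smul_mem _ c hA1
          obtain ⟨N, hN⟩ := hnilp z hz
          have : A.lcs U (N+1) = ⊥ := by
            refine le_bot_iff.1 (le_trans (key N) ?_)
            rw [Submodule.span_le]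
            rintro _ ⟨u', hu', rfl⟩
            have h0 : (f ^ N) u' = 0 := hN u' (hU'lt.le hu')
            simp only [h0]
            exact Submodule.zero_mem ⊥
          exact hA U hsub ⟨N+1, this⟩
        · -- genuine codimension two
          push_neg at hcod1
          set Wx := U' ⊔ Submodule.span F {x} with hWx
          set Wy := U' ⊔ Submodule.span F {y} with hWy
          have hWxU : Wx ≤ U := sup_le hU'lt.le
            (by rw [Submodule.span_le, Set.singleton_subset_iff]; exact hx)
          have hWyU : Wy ≤ U := sup_le hU'lt.le
            (by rw [Submodule.span_le, Set.singleton_subset_iff]; exact hy)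
          have hWxab : A.IsAbelian Wx := applyIH Wx hWxU (hcod1 x hx) le_sup_left
          have hWyab : A.IsAbelian Wy := applyIH Wy hWyU (hcod1 y hy) le_sup_left
          have hbr : ∀ u' ∈ U', ∀ v ∈ U, A.bracket u' v = 0 := by
            intro u' hu' v hv
            rw [← hxy] at hv
            obtain ⟨v', hv', w, hw, rfl⟩ := Submodule.mem_sup.1 hv
            obtain ⟨w1, hw1, w2, hw2, rfl⟩ := Submodule.mem_sup.1 hw
            obtain ⟨c1, rfl⟩ := Submodule.mem_span_singleton.1 hw1
            obtain ⟨c2, rfl⟩ := Submodule.mem_span_singleton.1 hw2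
            rw [map_add, map_add, map_smul, map_smul]
            have e0 : A.bracket u' v' = 0 := by
              have := A.mem_prod hu' hv'; rw [hU'ab] at this; exact this
            have ex : A.bracket u' x = 0 := by
              have := A.mem_prod (Submodule.mem_sup_left hu' : u' ∈ Wx)
                (Submodule.mem_sup_right (Submodule.mem_span_singleton_self x) : x ∈ Wx)
              rw [hWxab] at this; exact this
            have ey : A.bracket u' y = 0 := by
              have := A.mem_prod (Submodule.mem_sup_left hu' : u' ∈ Wy)
                (Submodule.mem_sup_right (Submodule.mem_span_singleton_self y) : y ∈ Wy)
              rw [hWyab] at this; exact this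
            rw [e0, ex, ey]; simp
          have hlcs2 : A.lcs U 2 = ⊥ := by
            rw [← le_bot_iff]
            show A.prod (A.prod U U) U ≤ ⊥
            rw [prod_le_iff]
            intro m hm v hv
            rw [Submodule.mem_bot]
            exact hbr m hm v hv
          exact hA U hsub ⟨2, hlcs2⟩

end LeibnizAlg
end Aux2

section Aux3

variable {F : Type*} {L : Type*} [Field F] [AddCommGroup L] [Module F L]

namespace LeibnizAlg

variable (A : LeibnizAlg F L) [FiniteDimensional F L]

/-- Key structure lemma: every solvable subalgebra `U` of an A-algebra has an
abelian subalgebra `C` with `C ⊔ [U,U] = U`. -/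
lemma exists_abelian_supplement (hA : A.IsAAlgebra) :
    ∀ (d : ℕ) (U : Submodule F L), Module.finrank F U ≤ d → A.IsSubalgebra U →
      A.Solv U → ∃ C : Submodule F L, C ≤ U ∧ A.IsAbelian C ∧ C ⊔ A.prod U U = U := by
  intro d
  induction d with
  | zero =>
      intro U hrank hsub _
      have hU : U = ⊥ := Submodule.finrank_eq_zero.1 (by omega)
      refine ⟨⊥, bot_le, ?_, ?_⟩
      · rw [IsAbelian, ← le_bot_iff, prod_le_iff]
        intro m hm n hn
        rw [Submodule.mem_bot] at hm; subst hm; simp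
      · subst hU
        rw [bot_sup_eq, ← le_bot_iff]
        exact hsub
  | succ d ih =>
      intro U hrank hsub hsolv
      by_cases hnilp : ∀ x ∈ U, NilpOn (A.rmul x) U
      · -- U itself is abelian
        have hab : A.IsAbelian U :=
          A.abelian_of_all_rmul_nilp hA (d+1) U hrank hsub hsolv hnilp
        exact ⟨U, le_rfl, hab, sup_eq_left.mpr hsub⟩
      · push_neg at hnilp
        obtain ⟨x, hx, hnx⟩ := hnilp
        set f := A.rmul x with hfdef
        -- basic invariance facts
        have hfU : ∀ u ∈ U, f u ∈ A.prod U U := fun u hu => A.mem_prod hu hx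
        have hU'U : A.prod U U ≤ U := hsub
        have hfkU : ∀ k, ∀ u ∈ U, (f ^ k) u ∈ U := by
          intro k
          induction k with
          | zero => intro u hu; simpa using hu
          | succ k ihk =>
              intro u hu
              rw [pow_succ', Module.End.mul_apply]
              exact hU'U (hfU _ (ihk u hu))
        have hidl : A.prod (A.prod U U) U ≤ A.prod U U := A.prod_prod_le hsub
        have hfkU' : ∀ k, ∀ w ∈ A.prod U U, (f ^ k) w ∈ A.prod U U := by
          intro k
          induction k with
          | zero => intro w hw; simpa using hw
          | succ k ihk =>
              intro w hw
              rw [pow_succ', Module.End.mul_apply]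
              exact hidl (A.mem_prod (ihk w hw) hx)
        -- stabilization of kernel and image chains
        have hkermono : Monotone (fun k => LinearMap.ker (f ^ k)) := by
          intro a b hab
          simp only
          induction hab with
          | refl => exact le_rfl
          | step _ ihk =>
              refine le_trans ihk ?_
              intro v hv
              rw [LinearMap.mem_ker] at hv ⊢
              rw [pow_succ', Module.End.mul_apply, hv, map_zero]
        have himgmono : ∀ a b : ℕ, a ≤ b → Submodule.map (f ^ b) U ≤ Submodule.map (f ^ a) U := by
          intro a b hab
          induction hab with
          | refl => exact le_rfl
          | step _ ihk =>
              refine le_trans ?_ ihk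
              rintro _ ⟨u, hu, rfl⟩
              rw [pow_succ, Module.End.mul_apply]
              exact Submodule.mem_map_of_mem (hU'U (hfU u hu))
        obtain ⟨n0, hn0⟩ := monotone_stabilizes_iff_noetherian.mpr inferInstance
          (⟨fun k => LinearMap.ker (f ^ k), hkermono⟩ : ℕ →o Submodule F L)
        obtain ⟨n1, hn1⟩ := IsArtinian.monotone_stabilizes
          (⟨fun k => OrderDual.toDual (Submodule.map (f ^ k) U),
            fun a b hab => himgmono a b hab⟩ : ℕ →o (Submodule F L)ᵒᵈ)
        set N := max n0 n1 + 1 with hN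
        have hker : ∀ m, N ≤ m → LinearMap.ker (f ^ N) = LinearMap.ker (f ^ m) := by
          intro m hm
          have h1 : LinearMap.ker (f ^ n0) = LinearMap.ker (f ^ N) := hn0 N (by omega)
          have h2 : LinearMap.ker (f ^ n0) = LinearMap.ker (f ^ m) := hn0 m (by omega)
          rw [← h1, h2]
        have himg : ∀ m, N ≤ m → Submodule.map (f ^ N) U = Submodule.map (f ^ m) U := by
          intro m hm
          have h1 : Submodule.map (f ^ n1) U = Submodule.map (f ^ N) U :=
            congrArg OrderDual.ofDual (hn1 N (by omega))
          have h2 : Submodule.map (f ^ n1) U = Submodule.map (f ^ m) U :=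
            congrArg OrderDual.ofDual (hn1 m (by omega))
          rw [← h1, h2]
        set U₀ := U ⊓ LinearMap.ker (f ^ N) with hU₀
        set U₁ := Submodule.map (f ^ N) U with hU₁
        have hU₁leU' : U₁ ≤ A.prod U U := by
          rintro _ ⟨u, hu, rfl⟩
          have : (f ^ N) u = (f ^ (max n0 n1)) (f u) := by
            rw [hN, pow_succ, Module.End.mul_apply]
          rw [this]
          exact hfkU' _ _ (hfU u hu)
        have hU₀U : U₀ ≤ U := inf_le_left
        have hU₁U : U₁ ≤ U := le_trans hU₁leU' hU'U
        have hsum : U₀ ⊔ U₁ = U := by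
          apply le_antisymm (sup_le hU₀U hU₁U)
          intro u hu
          have h1 : (f ^ N) u ∈ Submodule.map (f ^ (N + N)) U := by
            rw [← himg (N+N) (by omega)]
            exact ⟨u, hu, rfl⟩
          obtain ⟨w, hw, hw2⟩ := h1
          have hfNw : (f ^ N) w ∈ U := hfkU N w hw
          have hker0 : u - (f ^ N) w ∈ LinearMap.ker (f ^ N) := by
            rw [LinearMap.mem_ker, map_sub, ← Module.End.mul_apply, ← pow_add, hw2, sub_self]
          refine Submodule.mem_sup.2 ⟨u - (f ^ N) w, ⟨Submodule.sub_mem U hu hfNw, hker0⟩,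
            (f ^ N) w, ⟨w, hw, rfl⟩, by abel⟩
        have hU₀sub : A.IsSubalgebra U₀ := by
          rw [IsSubalgebra, prod_le_iff]
          intro a ha b hb
          refine ⟨hsub (A.mem_prod (hU₀U ha) (hU₀U hb)), ?_⟩
          have hk : (f ^ (N + N)) (A.bracket a b) = 0 :=
            A.ker_pow_bracket x (N+N) N N rfl a b ha.2 hb.2
          show A.bracket a b ∈ LinearMap.ker (f ^ N)
          rw [hker (N+N) (by omega), LinearMap.mem_ker]
          exact hk
        have hU₀ne : U₀ ≠ U := by
          intro h
          apply hnx
          refine ⟨N, fun u hu => ?_⟩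
          have h2 : u ∈ U₀ := by rw [h]; exact hu
          exact h2.2
        have hU₀lt : U₀ < U := lt_of_le_of_ne hU₀U hU₀ne
        have hrank0 : Module.finrank F U₀ ≤ d :=
          Nat.lt_succ_iff.1 (lt_of_lt_of_le (Submodule.finrank_lt_finrank_of_lt hU₀lt) hrank)
        obtain ⟨C, hCle, hCab, hCsup⟩ := ih U₀ hrank0 hU₀sub (Solv.mono A hU₀U hsolv)
        refine ⟨C, le_trans hCle hU₀U, hCab, ?_⟩
        apply le_antisymm (sup_le (le_trans hCle hU₀U) hU'U)
        have h1 : U₀ ≤ C ⊔ A.prod U U := by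
          calc U₀ = C ⊔ A.prod U₀ U₀ := hCsup.symm
            _ ≤ C ⊔ A.prod U U := sup_le_sup_left (A.prod_mono hU₀U hU₀U) C
        have h2 : U₀ ⊔ U₁ ≤ C ⊔ A.prod U U := sup_le h1 (le_trans hU₁leU' le_sup_right)
        rw [hsum] at h2
        exact h2

end LeibnizAlg
end Aux3

section Aux4

variable {F : Type*} {L : Type*} [Field F] [AddCommGroup L] [Module F L]

namespace LeibnizAlg

variable (A : LeibnizAlg F L) [FiniteDimensional F L]

/-- Complement version: an abelian subalgebra complement to `[U,U]` in `U`. -/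
lemma exists_abelian_complement (hA : A.IsAAlgebra) (U : Submodule F L)
    (hsub : A.IsSubalgebra U) (hsolv : A.Solv U) :
    ∃ B : Submodule F L, B ≤ U ∧ A.IsAbelian B ∧
      B ⊔ A.prod U U = U ∧ B ⊓ A.prod U U = ⊥ := by
  obtain ⟨C, hCU, hCab, hCsup⟩ :=
    A.exists_abelian_supplement hA (Module.finrank F U) U le_rfl hsub hsolv
  set U' := A.prod U U with hU'
  set D : Submodule F ↥C := Submodule.comap C.subtype U' with hD
  obtain ⟨D', hD'⟩ := Submodule.exists_isCompl D
  set B := Submodule.map C.subtype D' with hB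
  have hBC : B ≤ C := Submodule.map_subtype_le C D'
  have hmapD : Submodule.map C.subtype D = C ⊓ U' := Submodule.map_comap_subtype C U'
  have hsup2 : B ⊔ (C ⊓ U') = C := by
    rw [hB, ← hmapD, ← Submodule.map_sup, hD'.symm.sup_eq_top, Submodule.map_top,
      Submodule.range_subtype]
  have hinf2 : B ⊓ (C ⊓ U') = ⊥ := by
    rw [hB, ← hmapD, ← Submodule.map_inf _ (Submodule.injective_subtype C),
      hD'.symm.inf_eq_bot, Submodule.map_bot]
  refine ⟨B, le_trans hBC hCU, ?_, ?_, ?_⟩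
  · have : A.prod B B ≤ A.prod C C := A.prod_mono hBC hBC
    rw [hCab] at this
    exact le_bot_iff.1 this
  · have h : (C ⊓ U') ⊔ U' = U' := sup_eq_right.mpr inf_le_right
    rw [← h, ← sup_assoc, hsup2, hCsup]
  · have : B ⊓ U' ≤ B ⊓ (C ⊓ U') := le_inf inf_le_left (le_inf (le_trans inf_le_left hBC) inf_le_right)
    rw [hinf2] at this
    exact le_bot_iff.1 this

end LeibnizAlg
end Aux4

/-- A solvable Leibniz A-algebra of derived length `n+1` decomposes as
`L = A_n ∔ A_{n-1} ∔ … ∔ A_0` with each `A_i` an abelian subalgebra, and the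
decomposition can be chosen so that `L^(i) = A_n ∔ … ∔ A_i` for each `0 ≤ i ≤ n`. -/
theorem solvable_A_algebra_decomposition
    {F L : Type*} [Field F] [AddCommGroup L] [Module F L] [FiniteDimensional F L]
    (A : LeibnizAlg F L) (hA : A.IsAAlgebra) (n : ℕ)
    (hlen : A.derSeries (n + 1) = ⊥) (hlen' : A.derSeries n ≠ ⊥) :
    ∃ Afam : Fin (n + 1) → Submodule F L,
      (∀ i, A.IsSubalgebra (Afam i)) ∧
      (∀ i, A.IsAbelian (Afam i)) ∧
      iSupIndep Afam ∧
      (⨆ i, Afam i) = ⊤ ∧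
      (∀ i : Fin (n + 1),
        A.derSeries (i : ℕ) = ⨆ j : Fin (n + 1), ⨆ _ : i ≤ j, Afam j) := by
  classical
  set dS := A.derSeries with hdS
  have hsubalg : ∀ i : ℕ, A.IsSubalgebra (dS i) := fun i => A.derSeries_succ_le i
  have hex : ∀ i : ℕ, ∃ B : Submodule F L, B ≤ dS i ∧ A.IsAbelian B ∧
      B ⊔ A.prod (dS i) (dS i) = dS i ∧ B ⊓ A.prod (dS i) (dS i) = ⊥ :=
    fun i => A.exists_abelian_complement hA (dS i) (hsubalg i) (A.solv_derSeries n hlen i)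
  choose B hBle hBab hBsup hBinf using hex
  -- rephrase with dS (i+1)
  have hBsup' : ∀ i : ℕ, B i ⊔ dS (i+1) = dS i := hBsup
  have hBinf' : ∀ i : ℕ, B i ⊓ dS (i+1) = ⊥ := hBinf
  have hBbot : ∀ m : ℕ, n < m → B m = ⊥ := by
    intro m hm
    have : B m ≤ dS (n+1) := le_trans (hBle m) (A.derSeries_antitone (by omega))
    rw [hlen] at this
    exact le_bot_iff.1 this
  set Afam : Fin (n+1) → Submodule F L := fun j => B j.val with hAfam
  -- ℕ-indexed suprema
  set Sge : ℕ → Submodule F L := fun i => ⨆ m : ℕ, ⨆ _ : i ≤ m, B m with hSge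
  set Slt : ℕ → Submodule F L := fun i => ⨆ m : ℕ, ⨆ _ : m < i, B m with hSlt
  have hleSge : ∀ i m : ℕ, i ≤ m → B m ≤ Sge i := by
    intro i m h
    calc B m ≤ ⨆ _ : i ≤ m, B m := le_iSup (fun _ : i ≤ m => B m) h
      _ ≤ Sge i := le_iSup (fun m => ⨆ _ : i ≤ m, B m) m
  have hleSlt : ∀ i m : ℕ, m < i → B m ≤ Slt i := by
    intro i m h
    calc B m ≤ ⨆ _ : m < i, B m := le_iSup (fun _ : m < i => B m) h
      _ ≤ Slt i := le_iSup (fun m => ⨆ _ : m < i, B m) m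
  have hleAfam : ∀ i j : Fin (n+1), i ≤ j →
      Afam j ≤ ⨆ j : Fin (n+1), ⨆ _ : i ≤ j, Afam j := by
    intro i j h
    calc Afam j ≤ ⨆ _ : i ≤ j, Afam j := le_iSup (fun _ : i ≤ j => Afam j) h
      _ ≤ _ := le_iSup (fun j => ⨆ _ : i ≤ j, Afam j) j
  have hSgesplit : ∀ i : ℕ, Sge i = B i ⊔ Sge (i+1) := by
    intro i
    apply le_antisymm
    · refine iSup₂_le fun m him => ?_
      rcases eq_or_lt_of_le him with h | h
      · exact h ▸ le_sup_left
      · exact le_trans (hleSge (i+1) m h) le_sup_right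
    · refine sup_le (hleSge i i le_rfl) ?_
      exact iSup₂_le fun m him => hleSge i m (by omega)
  have hSgetop : Sge (n+1) = ⊥ := by
    rw [← le_bot_iff]
    exact iSup₂_le fun m hm => (hBbot m (by omega)) ▸ le_rfl
  have hSgeEq : ∀ k i : ℕ, i ≤ n + 1 → n + 1 - i = k → Sge i = dS i := by
    intro k
    induction k with
    | zero =>
        intro i hi1 hi2
        have : i = n + 1 := by omega
        subst this
        rw [hSgetop, hlen]
    | succ k ih =>
        intro i hi1 hi2
        have hin : i ≤ n := by omega
        rw [hSgesplit i, ih (i+1) (by omega) (by omega), hBsup' i]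
  -- translating Fin-suprema to ℕ-suprema
  have hFinEq : ∀ i : Fin (n+1), (⨆ j : Fin (n+1), ⨆ _ : i ≤ j, Afam j) = Sge i.val := by
    intro i
    apply le_antisymm
    · refine iSup₂_le fun j hij => ?_
      exact hleSge i.val j.val (Fin.le_def.1 hij)
    · refine iSup₂_le fun m him => ?_
      by_cases hm : m ≤ n
      · exact hleAfam i (⟨m, by omega⟩ : Fin (n+1)) (Fin.le_def.2 him)
      · rw [hBbot m (by omega)]
        exact bot_le
  have hmain : ∀ i : Fin (n+1),
      A.derSeries (i : ℕ) = ⨆ j : Fin (n+1), ⨆ _ : i ≤ j, Afam j := by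
    intro i
    rw [hFinEq i, hSgeEq (n + 1 - i.val) i.val (by omega) rfl]
  -- disjointness machinery
  have hSltdisj : ∀ i : ℕ, ∀ v : L, v ∈ Slt i → v ∈ dS i → v = 0 := by
    intro i
    induction i with
    | zero =>
        intro v hv _
        have : Slt 0 ≤ ⊥ := iSup₂_le fun m hm => absurd hm (by omega)
        simpa using this hv
    | succ i ih =>
        intro v hv hvd
        have hsplit : Slt (i+1) ≤ Slt i ⊔ B i := by
          refine iSup₂_le fun m hm => ?_
          rcases lt_or_eq_of_le (Nat.lt_succ_iff.1 hm) with h | h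
          · exact le_trans (hleSlt i m h) le_sup_left
          · exact h ▸ le_sup_right
        obtain ⟨s, hs, b, hb, hsb⟩ := Submodule.mem_sup.1 (hsplit hv)
        have hbDS : b ∈ dS i := hBle i hb
        have hvDS : v ∈ dS i := A.derSeries_succ_le i hvd
        have hsDS : s ∈ dS i := by
          have : s = v - b := by rw [← hsb]; abel
          rw [this]
          exact Submodule.sub_mem _ hvDS hbDS
        have hs0 : s = 0 := ih s hs hsDS
        have hvb : v = b := by rw [← hsb, hs0, zero_add]
        have : v ∈ B i ⊓ dS (i+1) := ⟨hvb ▸ hb, hvd⟩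
        rw [hBinf' i] at this
        simpa using this
  have hindep : iSupIndep Afam := by
    intro i
    rw [disjoint_iff_inf_le]
    have hle2 : (⨆ j, ⨆ _ : j ≠ i, Afam j) ≤ Slt i.val ⊔ dS (i.val + 1) := by
      refine iSup₂_le fun j hj => ?_
      rcases lt_or_gt_of_ne (fun h => hj (Fin.ext h) : (j : ℕ) ≠ (i : ℕ)) with h | h
      · exact le_trans (hleSlt i.val j.val h) le_sup_left
      · exact le_trans (le_trans (hBle j.val) (A.derSeries_antitone (by omega))) le_sup_right
    intro v hv
    obtain ⟨hv1, hv2⟩ := hv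
    obtain ⟨s, hs, w, hw, hsw⟩ := Submodule.mem_sup.1 (hle2 hv2)
    have hvdS : v ∈ dS i.val := hBle i.val hv1
    have hsdS : s ∈ dS i.val := by
      have : s = v - w := by rw [← hsw]; abel
      rw [this]
      exact Submodule.sub_mem _ hvdS (A.derSeries_succ_le i.val hw)
    have hs0 : s = 0 := hSltdisj i.val s hs hsdS
    have hvw : v = w := by rw [← hsw, hs0, zero_add]
    have : v ∈ B i.val ⊓ dS (i.val + 1) := ⟨hv1, hvw ▸ hw⟩
    rw [hBinf' i.val] at this
    simpa using this
  refine ⟨Afam, ?_, ?_, hindep, ?_, hmain⟩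
  · intro i
    rw [LeibnizAlg.IsSubalgebra, hBab i.val]
    exact bot_le
  · exact fun i => hBab i.val
  · have h0 := hmain 0
    have : (⨆ j : Fin (n+1), ⨆ _ : (0 : Fin (n+1)) ≤ j, Afam j) = ⨆ j, Afam j := by
      apply le_antisymm (iSup₂_le fun j _ => le_iSup Afam j)
      exact iSup_le fun j => hleAfam 0 j (Fin.zero_le j)
    rw [this] at h0
    rw [← h0]
    rfl
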